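/- arXiv:2107.12570 — 5 statements merged into one kernel-verified Lean document; each statement's English description precedes it below -/
import Mathlib

section
/- Let p > 2. There exists a constant C_p > 0 such that for all a, b ≥ 0, (a+b)^p ≥ a^p + b^p + p·a^(p-1)·b + p·a·b^(p-1) − C_p·a^(p/2)·b^(p/2). -/
open Real

private lemma key_aux (p : ℝ) (hp : 2 < p) (a b : ℝ) (ha : 0 ≤ a) (hb : 0 ≤ b)
    (hba : b ≤ a) :
    a ^ p + b ^ p + p * a ^ (p - 1) * b + p * a * b ^ (p - 1)
      - (p + 1) * a ^ (p / 2) * b ^ (p / 2) ≤ (a + b) ^ p := by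
  have hp0 : (0:ℝ) < p := by linarith
  rcases eq_or_lt_of_le ha with rfl | ha0
  · have hb0 : b = 0 := le_antisymm hba hb
    subst hb0
    simp [Real.zero_rpow hp0.ne', Real.zero_rpow (by linarith : p - 1 ≠ 0),
      Real.zero_rpow (by positivity : p / 2 ≠ 0)]
  -- Bernoulli: a^p + p a^{p-1} b ≤ (a+b)^p
  have h1 : a ^ p + p * a ^ (p - 1) * b ≤ (a + b) ^ p := by
    have hB : 1 + p * (b / a) ≤ (1 + b / a) ^ p :=
      one_add_mul_self_le_rpow_one_add (le_trans (by norm_num) (by positivity : (0:ℝ) ≤ b / a)) (by linarith)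
    have hmul := mul_le_mul_of_nonneg_right hB (Real.rpow_nonneg ha p)
    have e1 : (1 + b / a) ^ p * a ^ p = (a + b) ^ p := by
      rw [← Real.mul_rpow (by positivity) ha]
      congr 1
      field_simp
    have e2 : (1 + p * (b / a)) * a ^ p = a ^ p + p * a ^ (p - 1) * b := by
      have : a ^ p = a ^ (p - 1) * a := by
        rw [← Real.rpow_add_one ha0.ne' (p - 1)]; ring_nf
      rw [this]
      field_simp
    rw [e1, e2] at hmul
    exact hmul
  have hq : (0:ℝ) < p / 2 := by linarith
  have hle : b ^ (p / 2) ≤ a ^ (p / 2) := Real.rpow_le_rpow hb hba hq.le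
  have h2 : b ^ p ≤ a ^ (p / 2) * b ^ (p / 2) := by
    have : b ^ p = b ^ (p / 2) * b ^ (p / 2) := by
      rw [← Real.rpow_add' hb (by linarith)]
      ring_nf
    rw [this]
    exact mul_le_mul_of_nonneg_right hle (Real.rpow_nonneg hb _)
  have h3 : a * b ^ (p - 1) ≤ a ^ (p / 2) * b ^ (p / 2) := by
    have e : b ^ (p - 1) = b ^ (p / 2) * b ^ (p / 2 - 1) := by
      rw [← Real.rpow_add' hb (by intro h; nlinarith)]
      ring_nf
    have hle2 : b ^ (p / 2 - 1) ≤ a ^ (p / 2 - 1) :=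
      Real.rpow_le_rpow hb hba (by linarith)
    have ea : a * a ^ (p / 2 - 1) = a ^ (p / 2) := by
      rw [← Real.rpow_one_add' ha (by intro h; linarith)]
      ring_nf
    calc a * b ^ (p - 1) = a * b ^ (p / 2 - 1) * b ^ (p / 2) := by rw [e]; ring
      _ ≤ a * a ^ (p / 2 - 1) * b ^ (p / 2) := by
          apply mul_le_mul_of_nonneg_right _ (Real.rpow_nonneg hb _)
          exact mul_le_mul_of_nonneg_left hle2 ha
      _ = a ^ (p / 2) * b ^ (p / 2) := by rw [ea]
  nlinarith [h1, h2, h3, hp0]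

theorem power_sum_interaction_estimate (p : ℝ) (hp : 2 < p) :
    ∃ C : ℝ, 0 < C ∧ ∀ a b : ℝ, 0 ≤ a → 0 ≤ b →
      a ^ p + b ^ p + p * a ^ (p - 1) * b + p * a * b ^ (p - 1)
        - C * a ^ (p / 2) * b ^ (p / 2) ≤ (a + b) ^ p := by
  refine ⟨p + 1, by linarith, fun a b ha hb => ?_⟩
  rcases le_total b a with h | h
  · exact key_aux p hp a b ha hb h
  · have := key_aux p hp b a hb ha h
    rw [add_comm b a] at this
    nlinarith [this]
end

section
/- Let γ₁ > 1 and γ₂ > 1, and let 0 < η < min{γ₁, γ₂} − 1. Then there exists a constant C > 0 (depending on γ₁, γ₂, η) such that for all x, y ≥ 0: (1+x)^γ₁ (1+y)^γ₂ ≥ 1 + x^γ₁ y^γ₂ + γ₁ x + γ₂ y − C (x^(γ₁−1−η) y^γ₂ + x^γ₁ y^(γ₂−1−η)). -/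
open Real

private lemma one_add_rpow_aux {γ x : ℝ} (hγ : 1 ≤ γ) (hx : 0 ≤ x) :
    1 + x ^ γ ≤ (1 + x) ^ γ := by
  have h := NNReal.add_rpow_le_rpow_add 1 x.toNNReal hγ
  have := (NNReal.coe_le_coe).2 h
  simpa [NNReal.coe_rpow, Real.coe_toNNReal x hx] using this

private lemma bernoulli_aux {γ x : ℝ} (hγ : 1 ≤ γ) (hx : 0 ≤ x) :
    1 + γ * x ≤ (1 + x) ^ γ := by
  have := one_add_mul_self_le_rpow_one_add (by linarith : (-1 : ℝ) ≤ x) hγ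
  linarith

-- main step for the case y ≤ 1 (any x ≥ 0)
private lemma small_case {γ₁ γ₂ x y : ℝ} (h₁ : 1 < γ₁) (h₂ : 1 < γ₂)
    (hx : 0 ≤ x) (hy : 0 ≤ y) (hy1 : y ≤ 1) :
    1 + x ^ γ₁ * y ^ γ₂ + γ₁ * x + γ₂ * y ≤ (1 + x) ^ γ₁ * (1 + y) ^ γ₂ := by
  have hA1 : 1 + γ₁ * x ≤ (1 + x) ^ γ₁ := bernoulli_aux h₁.le hx
  have hA2 : 1 + x ^ γ₁ ≤ (1 + x) ^ γ₁ := one_add_rpow_aux h₁.le hx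
  have hB : 1 + γ₂ * y ≤ (1 + y) ^ γ₂ := bernoulli_aux h₂.le hy
  have hxp : 0 ≤ x ^ γ₁ := rpow_nonneg hx _
  have hyy : y ^ γ₂ ≤ y := by
    calc y ^ γ₂ ≤ y ^ (1 : ℝ) :=
          rpow_le_rpow_of_exponent_ge' hy hy1 one_pos.le h₂.le
      _ = y := rpow_one y
  have hApos : 0 ≤ (1 + x) ^ γ₁ := rpow_nonneg (by linarith) _
  have step1 : (1 + x) ^ γ₁ * (1 + γ₂ * y) ≤ (1 + x) ^ γ₁ * (1 + y) ^ γ₂ :=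
    mul_le_mul_of_nonneg_left hB hApos
  have step2 : 1 + x ^ γ₁ * y ^ γ₂ + γ₁ * x + γ₂ * y ≤ (1 + x) ^ γ₁ * (1 + γ₂ * y) := by
    have h3 : x ^ γ₁ * y ^ γ₂ ≤ x ^ γ₁ * (γ₂ * y) := by
      have : y ^ γ₂ ≤ γ₂ * y := by nlinarith
      exact mul_le_mul_of_nonneg_left this hxp
    have h4 : (γ₂ * y) * (1 + x ^ γ₁) ≤ (γ₂ * y) * (1 + x) ^ γ₁ :=
      mul_le_mul_of_nonneg_left hA2 (by positivity)
    nlinarith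
  linarith

theorem two_variable_interaction_inequality (γ₁ γ₂ η : ℝ)
    (h₁ : 1 < γ₁) (h₂ : 1 < γ₂) (hη : 0 < η) (hη' : η < min γ₁ γ₂ - 1) :
    ∃ C : ℝ, 0 < C ∧ ∀ x y : ℝ, 0 ≤ x → 0 ≤ y →
      1 + x ^ γ₁ * y ^ γ₂ + γ₁ * x + γ₂ * y
        - C * (x ^ (γ₁ - 1 - η) * y ^ γ₂ + x ^ γ₁ * y ^ (γ₂ - 1 - η))
        ≤ (1 + x) ^ γ₁ * (1 + y) ^ γ₂ := by
  have hm1 : η < γ₁ - 1 := lt_of_lt_of_le hη' (by linarith [min_le_left γ₁ γ₂])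
  have hm2 : η < γ₂ - 1 := lt_of_lt_of_le hη' (by linarith [min_le_right γ₁ γ₂])
  refine ⟨γ₁ + γ₂, by linarith, fun x y hx hy => ?_⟩
  have hT1 : 0 ≤ x ^ (γ₁ - 1 - η) * y ^ γ₂ :=
    mul_nonneg (rpow_nonneg hx _) (rpow_nonneg hy _)
  have hT2 : 0 ≤ x ^ γ₁ * y ^ (γ₂ - 1 - η) :=
    mul_nonneg (rpow_nonneg hx _) (rpow_nonneg hy _)
  rcases le_or_gt y 1 with hy1 | hy1
  · have := small_case h₁ h₂ hx hy hy1
    nlinarith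
  rcases le_or_gt x 1 with hx1 | hx1
  · have h := small_case h₂ h₁ hy hx hx1
    have e1 : y ^ γ₂ * x ^ γ₁ = x ^ γ₁ * y ^ γ₂ := mul_comm _ _
    have e2 : (1 + y) ^ γ₂ * (1 + x) ^ γ₁ = (1 + x) ^ γ₁ * (1 + y) ^ γ₂ := mul_comm _ _
    nlinarith
  · -- x > 1, y > 1
    have hx1' : (1:ℝ) ≤ x := hx1.le
    have hy1' : (1:ℝ) ≤ y := hy1.le
    have hP : 1 + x ^ γ₁ * y ^ γ₂ ≤ (1 + x) ^ γ₁ * (1 + y) ^ γ₂ := by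
      have hA2 : 1 + x ^ γ₁ ≤ (1 + x) ^ γ₁ := one_add_rpow_aux h₁.le hx
      have hB2 : 1 + y ^ γ₂ ≤ (1 + y) ^ γ₂ := one_add_rpow_aux h₂.le hy
      have hxp : 0 ≤ x ^ γ₁ := rpow_nonneg hx _
      have hyp : 0 ≤ y ^ γ₂ := rpow_nonneg hy _
      nlinarith
    have hT1' : y ≤ x ^ (γ₁ - 1 - η) * y ^ γ₂ := by
      have e1 : (1:ℝ) ≤ x ^ (γ₁ - 1 - η) := one_le_rpow hx1' (by linarith)
      have e2 : y ≤ y ^ γ₂ := by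
        calc y = y ^ (1:ℝ) := (rpow_one y).symm
          _ ≤ y ^ γ₂ := rpow_le_rpow_of_exponent_le hy1' h₂.le
      nlinarith
    have hT2' : x ≤ x ^ γ₁ * y ^ (γ₂ - 1 - η) := by
      have e1 : (1:ℝ) ≤ y ^ (γ₂ - 1 - η) := one_le_rpow hy1' (by linarith)
      have e2 : x ≤ x ^ γ₁ := by
        calc x = x ^ (1:ℝ) := (rpow_one x).symm
          _ ≤ x ^ γ₁ := rpow_le_rpow_of_exponent_le hx1' h₁.le
      nlinarith
    nlinarith
end

section
/- Let γ₁ > 1, γ₂ > 1 and 0 < η < min{γ₁, γ₂} − 1. There exists C > 0 such that for all a₁, a₂, b₁, b₂ ≥ 0: (a₁+b₁)^γ₁ (a₂+b₂)^γ₂ ≥ a₁^γ₁ a₂^γ₂ + γ₁ a₁^(γ₁−1) a₂^γ₂ b₁ + γ₂ a₁^γ₁ a₂^(γ₂−1) b₂ + b₁^γ₁ b₂^γ₂ − C ( a₁^(1+η) b₁^(γ₁−1−η) b₂^γ₂ + a₂^(1+η) b₂^(γ₂−1−η) b₁^γ₁ ). -/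
open Real

-- Bernoulli: a^γ + γ a^(γ-1) b ≤ (a+b)^γ
lemma bern_aux {a b γ : ℝ} (ha : 0 ≤ a) (hb : 0 ≤ b) (hγ : 1 < γ) :
    a ^ γ + γ * a ^ (γ - 1) * b ≤ (a + b) ^ γ := by
  rcases eq_or_lt_of_le ha with rfl | ha'
  · rw [Real.zero_rpow (by linarith), Real.zero_rpow (by linarith), zero_add]
    simpa using Real.rpow_nonneg hb γ
  · have h := one_add_mul_self_le_rpow_one_add (s := b / a) (le_trans (by norm_num) (div_nonneg hb ha'.le)) hγ.le
    have key : (1 + b/a) ^ γ = (a + b) ^ γ / a ^ γ := by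
      rw [← Real.div_rpow (by positivity) ha]
      congr 1
      field_simp
    rw [key] at h
    have hag : (0:ℝ) < a ^ γ := Real.rpow_pos_of_pos ha' γ
    have h2 : (1 + γ * (b / a)) * a ^ γ ≤ (a + b) ^ γ := by
      rw [← le_div_iff₀ hag]; linarith
    calc a ^ γ + γ * a ^ (γ - 1) * b = (1 + γ * (b / a)) * a ^ γ := by
          have : a ^ γ = a ^ (γ - 1) * a := by
            rw [← Real.rpow_add_one ha'.ne' (γ - 1)]; ring_nf
          rw [this]; field_simp
      _ ≤ (a + b) ^ γ := h2

-- superadditivity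
lemma superadd_aux {a b γ : ℝ} (ha : 0 ≤ a) (hb : 0 ≤ b) (hγ : 1 ≤ γ) :
    a ^ γ + b ^ γ ≤ (a + b) ^ γ := by
  have h := NNReal.add_rpow_le_rpow_add a.toNNReal b.toNNReal hγ
  have := NNReal.coe_le_coe.2 h
  simpa [NNReal.coe_rpow, Real.coe_toNNReal a ha, Real.coe_toNNReal b hb,
    ← Real.toNNReal_add ha hb, Real.coe_toNNReal (a+b) (add_nonneg ha hb)] using this

set_option maxHeartbeats 1600000 in
theorem four_variable_interaction_estimate (γ₁ γ₂ η : ℝ)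
    (h₁ : 1 < γ₁) (h₂ : 1 < γ₂) (hη : 0 < η) (hη' : η < min γ₁ γ₂ - 1) :
    ∃ C : ℝ, 0 < C ∧ ∀ a₁ a₂ b₁ b₂ : ℝ, 0 ≤ a₁ → 0 ≤ a₂ → 0 ≤ b₁ → 0 ≤ b₂ →
      a₁ ^ γ₁ * a₂ ^ γ₂ + γ₁ * a₁ ^ (γ₁ - 1) * a₂ ^ γ₂ * b₁
        + γ₂ * a₁ ^ γ₁ * a₂ ^ (γ₂ - 1) * b₂ + b₁ ^ γ₁ * b₂ ^ γ₂
        - C * (a₁ ^ (1 + η) * b₁ ^ (γ₁ - 1 - η) * b₂ ^ γ₂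
                + a₂ ^ (1 + η) * b₂ ^ (γ₂ - 1 - η) * b₁ ^ γ₁)
        ≤ (a₁ + b₁) ^ γ₁ * (a₂ + b₂) ^ γ₂ := by
  have hm1 : η < γ₁ - 1 := lt_of_lt_of_le hη' (by simp [min_le_left])
  have hm2 : η < γ₂ - 1 := lt_of_lt_of_le hη' (by simp [min_le_right])
  refine ⟨γ₁ + γ₂ + 1, by linarith, fun a₁ a₂ b₁ b₂ ha₁ ha₂ hb₁ hb₂ => ?_⟩
  have hg₁ : (0:ℝ) ≤ γ₁ := by linarith
  have hg₂ : (0:ℝ) ≤ γ₂ := by linarith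
  set E₁ := a₁ ^ (1 + η) * b₁ ^ (γ₁ - 1 - η) * b₂ ^ γ₂ with hE₁def
  set E₂ := a₂ ^ (1 + η) * b₂ ^ (γ₂ - 1 - η) * b₁ ^ γ₁ with hE₂def
  have hE₁ : 0 ≤ E₁ := by positivity
  have hE₂ : 0 ≤ E₂ := by positivity
  -- nonnegativity of key quantities
  have n1 : (0:ℝ) ≤ a₁ ^ γ₁ := Real.rpow_nonneg ha₁ _
  have n2 : (0:ℝ) ≤ a₂ ^ γ₂ := Real.rpow_nonneg ha₂ _
  have n3 : (0:ℝ) ≤ b₁ ^ γ₁ := Real.rpow_nonneg hb₁ _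
  have n4 : (0:ℝ) ≤ b₂ ^ γ₂ := Real.rpow_nonneg hb₂ _
  have n5 : (0:ℝ) ≤ a₁ ^ (γ₁ - 1) := Real.rpow_nonneg ha₁ _
  have n6 : (0:ℝ) ≤ a₂ ^ (γ₂ - 1) := Real.rpow_nonneg ha₂ _
  rcases le_or_gt b₁ a₁ with hc | hc₁
  · -- b₁ ≤ a₁ : error term E₁ dominates b₁^γ₁ b₂^γ₂
    have hsplit : b₁ ^ γ₁ = b₁ ^ (1 + η) * b₁ ^ (γ₁ - 1 - η) := by
      rw [← Real.rpow_add' hb₁ (by ring_nf; linarith)]; ring_nf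
    have hbd : b₁ ^ (1 + η) ≤ a₁ ^ (1 + η) := Real.rpow_le_rpow hb₁ hc (by linarith)
    have hD : b₁ ^ γ₁ * b₂ ^ γ₂ ≤ E₁ := by
      rw [hE₁def, hsplit]
      have : b₁ ^ (1 + η) * b₁ ^ (γ₁ - 1 - η) ≤ a₁ ^ (1 + η) * b₁ ^ (γ₁ - 1 - η) :=
        mul_le_mul_of_nonneg_right hbd (Real.rpow_nonneg hb₁ _)
      exact mul_le_mul_of_nonneg_right this n4
    have hA := bern_aux ha₁ hb₁ h₁
    have hB := bern_aux ha₂ hb₂ h₂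
    have hprod : (a₁ ^ γ₁ + γ₁ * a₁ ^ (γ₁ - 1) * b₁) * (a₂ ^ γ₂ + γ₂ * a₂ ^ (γ₂ - 1) * b₂)
        ≤ (a₁ + b₁) ^ γ₁ * (a₂ + b₂) ^ γ₂ :=
      mul_le_mul hA hB (by positivity) (Real.rpow_nonneg (by linarith) _)
    nlinarith [mul_nonneg (mul_nonneg (mul_nonneg hg₁ n5) hb₁)
        (mul_nonneg (mul_nonneg hg₂ n6) hb₂),
      mul_nonneg (by linarith : (0:ℝ) ≤ γ₁ + γ₂ + 1) hE₂,
      mul_nonneg (by linarith : (0:ℝ) ≤ γ₁ + γ₂) hE₁]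
  rcases le_or_gt b₂ a₂ with hc | hc₂
  · -- b₂ ≤ a₂ : error term E₂ dominates b₁^γ₁ b₂^γ₂
    have hsplit : b₂ ^ γ₂ = b₂ ^ (1 + η) * b₂ ^ (γ₂ - 1 - η) := by
      rw [← Real.rpow_add' hb₂ (by ring_nf; linarith)]; ring_nf
    have hbd : b₂ ^ (1 + η) ≤ a₂ ^ (1 + η) := Real.rpow_le_rpow hb₂ hc (by linarith)
    have hD : b₁ ^ γ₁ * b₂ ^ γ₂ ≤ E₂ := by
      rw [hE₂def, hsplit]
      have : b₂ ^ (1 + η) * b₂ ^ (γ₂ - 1 - η) ≤ a₂ ^ (1 + η) * b₂ ^ (γ₂ - 1 - η) :=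
        mul_le_mul_of_nonneg_right hbd (Real.rpow_nonneg hb₂ _)
      nlinarith [Real.rpow_nonneg hb₂ (γ₂ - 1 - η)]
    have hA := bern_aux ha₁ hb₁ h₁
    have hB := bern_aux ha₂ hb₂ h₂
    have hprod : (a₁ ^ γ₁ + γ₁ * a₁ ^ (γ₁ - 1) * b₁) * (a₂ ^ γ₂ + γ₂ * a₂ ^ (γ₂ - 1) * b₂)
        ≤ (a₁ + b₁) ^ γ₁ * (a₂ + b₂) ^ γ₂ :=
      mul_le_mul hA hB (by positivity) (Real.rpow_nonneg (by linarith) _)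
    nlinarith [mul_nonneg (mul_nonneg (mul_nonneg hg₁ n5) hb₁)
        (mul_nonneg (mul_nonneg hg₂ n6) hb₂),
      mul_nonneg (by linarith : (0:ℝ) ≤ γ₁ + γ₂ + 1) hE₁,
      mul_nonneg (by linarith : (0:ℝ) ≤ γ₁ + γ₂) hE₂]
  · -- a₁ < b₁ and a₂ < b₂
    have hAD : a₁ ^ γ₁ * a₂ ^ γ₂ + b₁ ^ γ₁ * b₂ ^ γ₂
        ≤ (a₁ + b₁) ^ γ₁ * (a₂ + b₂) ^ γ₂ := by
      have hprod : (a₁ ^ γ₁ + b₁ ^ γ₁) * (a₂ ^ γ₂ + b₂ ^ γ₂)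
          ≤ (a₁ + b₁) ^ γ₁ * (a₂ + b₂) ^ γ₂ :=
        mul_le_mul (superadd_aux ha₁ hb₁ h₁.le) (superadd_aux ha₂ hb₂ h₂.le)
          (by positivity) (Real.rpow_nonneg (by linarith) _)
      have expand : (a₁ ^ γ₁ + b₁ ^ γ₁) * (a₂ ^ γ₂ + b₂ ^ γ₂)
          = a₁ ^ γ₁ * a₂ ^ γ₂ + b₁ ^ γ₁ * b₂ ^ γ₂
            + (a₁ ^ γ₁ * b₂ ^ γ₂ + b₁ ^ γ₁ * a₂ ^ γ₂) := by ring
      rw [expand] at hprod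
      linarith [mul_nonneg n1 n4, mul_nonneg n3 n2]
    -- B₁ ≤ γ₁ E₂
    have t1 : a₁ ^ (γ₁ - 1) * b₁ ≤ b₁ ^ γ₁ := by
      have h1 : a₁ ^ (γ₁ - 1) ≤ b₁ ^ (γ₁ - 1) :=
        Real.rpow_le_rpow ha₁ hc₁.le (by linarith)
      have h2 : b₁ ^ (γ₁ - 1) * b₁ = b₁ ^ γ₁ := by
        rcases eq_or_lt_of_le hb₁ with rfl | hb₁'
        · rw [Real.zero_rpow (by linarith), Real.zero_rpow (by linarith)]; ring
        · rw [← Real.rpow_add_one hb₁'.ne' (γ₁ - 1)]; ring_nf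
      calc a₁ ^ (γ₁ - 1) * b₁ ≤ b₁ ^ (γ₁ - 1) * b₁ := mul_le_mul_of_nonneg_right h1 hb₁
        _ = b₁ ^ γ₁ := h2
    have t2 : a₂ ^ γ₂ ≤ a₂ ^ (1 + η) * b₂ ^ (γ₂ - 1 - η) := by
      have hsplit : a₂ ^ γ₂ = a₂ ^ (1 + η) * a₂ ^ (γ₂ - 1 - η) := by
        rw [← Real.rpow_add' ha₂ (by ring_nf; linarith)]; ring_nf
      rw [hsplit]
      exact mul_le_mul_of_nonneg_left
        (Real.rpow_le_rpow ha₂ hc₂.le (by linarith)) (Real.rpow_nonneg ha₂ _)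
    have hB₁ : γ₁ * a₁ ^ (γ₁ - 1) * a₂ ^ γ₂ * b₁ ≤ γ₁ * E₂ := by
      have key := mul_le_mul_of_nonneg_left (mul_le_mul t1 t2 n2 n3) hg₁
      calc γ₁ * a₁ ^ (γ₁ - 1) * a₂ ^ γ₂ * b₁
          = γ₁ * (a₁ ^ (γ₁ - 1) * b₁ * a₂ ^ γ₂) := by ring
        _ ≤ γ₁ * (b₁ ^ γ₁ * (a₂ ^ (1 + η) * b₂ ^ (γ₂ - 1 - η))) := key
        _ = γ₁ * E₂ := by rw [hE₂def]; ring
    -- B₂ ≤ γ₂ E₁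
    have s1 : a₂ ^ (γ₂ - 1) * b₂ ≤ b₂ ^ γ₂ := by
      have h1 : a₂ ^ (γ₂ - 1) ≤ b₂ ^ (γ₂ - 1) :=
        Real.rpow_le_rpow ha₂ hc₂.le (by linarith)
      have h2 : b₂ ^ (γ₂ - 1) * b₂ = b₂ ^ γ₂ := by
        rcases eq_or_lt_of_le hb₂ with rfl | hb₂'
        · rw [Real.zero_rpow (by linarith), Real.zero_rpow (by linarith)]; ring
        · rw [← Real.rpow_add_one hb₂'.ne' (γ₂ - 1)]; ring_nf
      calc a₂ ^ (γ₂ - 1) * b₂ ≤ b₂ ^ (γ₂ - 1) * b₂ := mul_le_mul_of_nonneg_right h1 hb₂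
        _ = b₂ ^ γ₂ := h2
    have s2 : a₁ ^ γ₁ ≤ a₁ ^ (1 + η) * b₁ ^ (γ₁ - 1 - η) := by
      have hsplit : a₁ ^ γ₁ = a₁ ^ (1 + η) * a₁ ^ (γ₁ - 1 - η) := by
        rw [← Real.rpow_add' ha₁ (by ring_nf; linarith)]; ring_nf
      rw [hsplit]
      exact mul_le_mul_of_nonneg_left
        (Real.rpow_le_rpow ha₁ hc₁.le (by linarith)) (Real.rpow_nonneg ha₁ _)
    have hB₂ : γ₂ * a₁ ^ γ₁ * a₂ ^ (γ₂ - 1) * b₂ ≤ γ₂ * E₁ := by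
      have key := mul_le_mul_of_nonneg_left (mul_le_mul s1 s2 n1 n4) hg₂
      calc γ₂ * a₁ ^ γ₁ * a₂ ^ (γ₂ - 1) * b₂
          = γ₂ * (a₂ ^ (γ₂ - 1) * b₂ * a₁ ^ γ₁) := by ring
        _ ≤ γ₂ * (b₂ ^ γ₂ * (a₁ ^ (1 + η) * b₁ ^ (γ₁ - 1 - η))) := key
        _ = γ₂ * E₁ := by rw [hE₁def]; ring
    nlinarith [mul_nonneg (by linarith : (0:ℝ) ≤ γ₂ + 1) hE₁,
      mul_nonneg (by linarith : (0:ℝ) ≤ γ₁ + 1) hE₂]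
end

section
/- Let r₁, r₂ > 1 be reals. For all s, t ≥ 0, s^{r₁} t^{r₂} ≤ (1/(r₁+r₂)) · r₁^{r₁/(r₁+r₂)} · r₂^{r₂/(r₁+r₂)} · ( s^{r₁+r₂} + t^{r₁+r₂} ). -/
open Real

theorem young_mixed_power_inequality (r₁ r₂ : ℝ) (hr₁ : 1 < r₁) (hr₂ : 1 < r₂) :
    ∀ s t : ℝ, 0 ≤ s → 0 ≤ t →
      s ^ r₁ * t ^ r₂ ≤ (1 / (r₁ + r₂)) * r₁ ^ (r₁ / (r₁ + r₂)) * r₂ ^ (r₂ / (r₁ + r₂))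
        * (s ^ (r₁ + r₂) + t ^ (r₁ + r₂)) := by
  intro s t hs ht
  have hr1 : (0:ℝ) < r₁ := by linarith
  have hr2 : (0:ℝ) < r₂ := by linarith
  have hRpos : (0:ℝ) < r₁ + r₂ := by linarith
  set R := r₁ + r₂ with hR
  set a := r₁ / R with ha
  set b := r₂ / R with hb
  have hapos : 0 < a := div_pos hr1 hRpos
  have hbpos : 0 < b := div_pos hr2 hRpos
  have hab : a + b = 1 := by
    rw [ha, hb, ← add_div, ← hR, div_self hRpos.ne']
  set x := s ^ R with hx
  set y := t ^ R with hy
  have hxnn : 0 ≤ x := rpow_nonneg hs R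
  have hynn : 0 ≤ y := rpow_nonneg ht R
  have key : (x / a) ^ a * (y / b) ^ b ≤ a * (x / a) + b * (y / b) :=
    Real.geom_mean_le_arith_mean2_weighted hapos.le hbpos.le
      (div_nonneg hxnn hapos.le) (div_nonneg hynn hbpos.le) hab
  have hrw : a * (x / a) + b * (y / b) = x + y := by
    field_simp
  rw [hrw] at key
  -- rewrite left side: s ^ r₁ * t ^ r₂ = a^a * b^b * ((x/a)^a * (y/b)^b)
  have hsx : s ^ r₁ = x ^ a := by
    rw [hx, ← Real.rpow_mul hs]
    congr 1
    rw [ha]; field_simp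
  have hty : t ^ r₂ = y ^ b := by
    rw [hy, ← Real.rpow_mul ht]
    congr 1
    rw [hb]; field_simp
  -- rewrite constant: (1/R) * r₁^a * r₂^b = a^a * b^b
  have hconst : (1 / R) * r₁ ^ a * r₂ ^ b = a ^ a * b ^ b := by
    have h1 : r₁ = R * a := by rw [ha]; field_simp
    have h2 : r₂ = R * b := by rw [hb]; field_simp
    rw [h1, h2, Real.mul_rpow hRpos.le hapos.le, Real.mul_rpow hRpos.le hbpos.le]
    have hRR : R ^ a * R ^ b = R := by
      rw [← Real.rpow_add hRpos, hab, Real.rpow_one]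
    calc 1 / R * (R ^ a * a ^ a) * (R ^ b * b ^ b)
        = (R ^ a * R ^ b) / R * (a ^ a * b ^ b) := by ring
      _ = a ^ a * b ^ b := by rw [hRR, div_self hRpos.ne', one_mul]
  have hmain : s ^ r₁ * t ^ r₂ = a ^ a * b ^ b * ((x / a) ^ a * (y / b) ^ b) := by
    rw [hsx, hty, Real.div_rpow hxnn hapos.le, Real.div_rpow hynn hbpos.le]
    field_simp
  rw [hmain, hconst]
  exact mul_le_mul_of_nonneg_left key (by positivity)
end

section
/- Let u₁, u₂ : ℝᴺ → [0,∞) be measurable functions vanishing at infinity and let u₁*, u₂* denote their symmetric-decreasing rearrangements. Let G(s,t) be continuously differentiable on ℝ₊² with G(0,0)=0 such that ∂₁G(s,·) is nondecreasing for each fixed s ≥ 0 and ∂₂G(·,t) is nondecreasing for each fixed t ≥ 0, and ∂₁G, ∂₂G ≥ 0. Then ∫_{ℝᴺ} G(u₁*, u₂*) dx ≥ ∫_{ℝᴺ} G(u₁, u₂) dx. -/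
open Real MeasureTheory Set Filter Topology

namespace RearrangementAux

variable {α : Type*} [MeasurableSpace α] {μ : Measure α}

lemma meas_gt_eq {u us : α → ℝ} (hu : ∀ x, 0 ≤ u x) (hus : ∀ x, 0 ≤ us x)
    (heq : ∀ t : ℝ, 0 < t → μ {x | t < us x} = μ {x | t < u x})
    {c : ℝ} (hc : 0 ≤ c) : μ {x | c < us x} = μ {x | c < u x} := by
  rcases hc.lt_or_eq with h | h
  · exact heq c h
  · subst h
    have hU : ∀ v : α → ℝ, {x | (0:ℝ) < v x} = ⋃ n : ℕ, {x | 1/((n:ℝ)+1) < v x} := by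
      intro v; ext x
      simp only [mem_setOf_eq, mem_iUnion]
      constructor
      · intro hx; exact exists_nat_one_div_lt hx
      · rintro ⟨n, hn⟩; exact lt_trans (by positivity) hn
    have hmono : ∀ v : α → ℝ, Monotone (fun n : ℕ => {x | 1/((n:ℝ)+1) < v x}) := by
      intro v n m hnm x hx
      have h1 : 1/((m:ℝ)+1) ≤ 1/((n:ℝ)+1) := by
        apply one_div_le_one_div_of_le (by positivity)
        have : (n:ℝ) ≤ m := Nat.cast_le.2 hnm
        linarith
      exact lt_of_le_of_lt h1 hx
    rw [hU u, hU us, (hmono u).measure_iUnion, (hmono us).measure_iUnion]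
    exact iSup_congr fun n => heq _ (by positivity)

lemma meas_ge_eq {u us : α → ℝ} (hum : Measurable u) (husm : Measurable us)
    (hvan : ∀ t : ℝ, 0 < t → μ {x | t < u x} < ⊤)
    (heq : ∀ t : ℝ, 0 < t → μ {x | t < us x} = μ {x | t < u x})
    {c : ℝ} (hc : 0 < c) : μ {x | c ≤ us x} = μ {x | c ≤ u x} := by
  set q : ℕ → ℝ := fun n => c - c/((n:ℝ)+2) with hq
  have hq0 : ∀ n : ℕ, 0 < q n := by
    intro n
    have : c/((n:ℝ)+2) < c := div_lt_self hc (by have := Nat.cast_nonneg (α:=ℝ) n; linarith)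
    simp only [hq]; linarith
  have hqmono : Monotone q := by
    intro n m hnm
    have : c/((m:ℝ)+2) ≤ c/((n:ℝ)+2) := by
      have hn0 : (0:ℝ) ≤ n := Nat.cast_nonneg n
      apply div_le_div_of_nonneg_left hc.le (by linarith)
      have : (n:ℝ) ≤ m := Nat.cast_le.2 hnm
      linarith
    simp only [hq]; linarith
  have hset : ∀ v : α → ℝ, (⋂ n : ℕ, {x | q n < v x}) = {x | c ≤ v x} := by
    intro v; ext x
    simp only [mem_iInter, mem_setOf_eq]
    constructor
    · intro hx
      by_contra h
      push_neg at h
      obtain ⟨n, hn⟩ := exists_nat_one_div_lt (div_pos (show (0:ℝ) < c - v x by linarith) hc)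
      have h1 : c * (1/((n:ℝ)+1)) < c * ((c - v x)/c) := mul_lt_mul_of_pos_left hn hc
      rw [mul_one_div, mul_div_cancel₀ _ hc.ne'] at h1
      have h2 : c/((n:ℝ)+2) ≤ c/((n:ℝ)+1) :=
        div_le_div_of_nonneg_left hc.le (by positivity) (by linarith)
      have := hx n
      simp only [hq] at this
      linarith
    · intro hx n
      have hd : 0 < c/((n:ℝ)+2) := by positivity
      have : q n < c := by simp only [hq]; linarith
      exact lt_of_lt_of_le this hx
  have hanti : ∀ v : α → ℝ, Antitone (fun n : ℕ => {x | q n < v x}) := by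
    intro v n m hnm x hx
    exact lt_of_le_of_lt (hqmono hnm) hx
  rw [← hset u, ← hset us]
  rw [Antitone.measure_iInter (hanti us)
      (fun n => (measurableSet_lt measurable_const husm).nullMeasurableSet)
      ⟨0, by rw [heq _ (hq0 0)]; exact (hvan _ (hq0 0)).ne⟩,
    Antitone.measure_iInter (hanti u)
      (fun n => (measurableSet_lt measurable_const hum).nullMeasurableSet)
      ⟨0, (hvan _ (hq0 0)).ne⟩]
  exact iInf_congr fun n => heq _ (hq0 n)

lemma radial_mono {E : Type*} [NormedAddCommGroup E] {us : E → ℝ}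
    (hus : ∀ x, 0 ≤ us x)
    (hball : ∀ t : ℝ, 0 < t → ∃ r : ℝ, {x | t < us x} = Metric.ball (0:E) r)
    {x y : E} (h : ‖y‖ < ‖x‖) : us x ≤ us y := by
  by_contra hlt
  push_neg at hlt
  set q := (us y + us x)/2 with hqdef
  have hq0 : 0 < q := by have := hus y; simp only [hqdef]; linarith
  obtain ⟨r, hr⟩ := hball q hq0
  have hx : x ∈ {z | q < us z} := by simp only [mem_setOf_eq, hqdef]; linarith
  rw [hr, Metric.mem_ball, dist_zero_right] at hx
  have hy : y ∈ Metric.ball (0:E) r := by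
    rw [Metric.mem_ball, dist_zero_right]; linarith
  rw [← hr] at hy
  simp only [mem_setOf_eq, hqdef] at hy
  linarith

lemma ball_subset_or {E : Type*} [NormedAddCommGroup E] {A B : Set E} {r : ℝ}
    (hA : A = Metric.ball (0:E) r) (hB : ∀ x ∈ B, ∀ y : E, ‖y‖ < ‖x‖ → y ∈ B) :
    A ⊆ B ∨ B ⊆ A := by
  rcases em (B ⊆ A) with h | h
  · exact Or.inr h
  · left
    rw [Set.not_subset] at h
    obtain ⟨x, hxB, hxA⟩ := h
    intro y hyA
    rw [hA, Metric.mem_ball, dist_zero_right] at hyA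
    have hx : r ≤ ‖x‖ := by
      by_contra hc
      push_neg at hc
      exact hxA (by rw [hA, Metric.mem_ball, dist_zero_right]; exact hc)
    exact hB x hxB y (lt_of_lt_of_le hyA hx)

lemma meas_inter_le {A B A' B' : Set α} (hAA : μ A' = μ A) (hBB : μ B' = μ B)
    (hor : A' ⊆ B' ∨ B' ⊆ A') : μ (A ∩ B) ≤ μ (A' ∩ B') := by
  rcases hor with h | h
  · rw [Set.inter_eq_self_of_subset_left h, hAA]
    exact measure_mono inter_subset_left
  · rw [Set.inter_eq_self_of_subset_right h, hBB]
    exact measure_mono inter_subset_right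

lemma monotone_level {φ : ℝ → ℝ} (hφ : Monotone φ) {τ : ℝ} (hτ : φ 0 < τ) :
    {t | τ < φ t} = ∅ ∨ (∃ c : ℝ, 0 ≤ c ∧ {t | τ < φ t} = Ioi c) ∨
      (∃ c : ℝ, 0 < c ∧ {t | τ < φ t} = Ici c) := by
  set V := {t | τ < φ t} with hV
  rcases eq_empty_or_nonempty V with h | hne
  · exact Or.inl h
  right
  have hpos : ∀ v ∈ V, 0 < v := by
    intro v hv
    by_contra h
    push_neg at h
    have := hφ h
    simp only [hV, mem_setOf_eq] at hv
    linarith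
  have hbdd : BddBelow V := ⟨0, fun v hv => (hpos v hv).le⟩
  have hc0 : 0 ≤ sInf V := le_csInf hne fun v hv => (hpos v hv).le
  have hup : ∀ v ∈ V, ∀ t, v ≤ t → t ∈ V := by
    intro v hv t hvt
    simp only [hV, mem_setOf_eq] at hv ⊢
    exact lt_of_lt_of_le hv (hφ hvt)
  by_cases hcV : sInf V ∈ V
  · right
    refine ⟨sInf V, hpos _ hcV, subset_antisymm (fun t ht => csInf_le hbdd ht) (fun t ht => hup _ hcV t ht)⟩
  · left
    refine ⟨sInf V, hc0, subset_antisymm ?_ ?_⟩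
    · intro t ht
      exact lt_of_le_of_ne (csInf_le hbdd ht) (by rintro rfl; exact hcV ht)
    · intro t ht
      obtain ⟨v, hvV, hvt⟩ := exists_lt_of_csInf_lt hne ht
      exact hup v hvV t hvt.le


lemma measurable_Gm {G : ℝ → ℝ → ℝ}
    (hc₁ : ∀ s t : ℝ, 0 ≤ s → 0 ≤ t → ContinuousAt (fun z => G z t) s)
    (hc₂ : ∀ s t : ℝ, 0 ≤ s → 0 ≤ t → ContinuousAt (fun z => G s z) t) :
    Measurable (fun p : ℝ × ℝ => G (max p.1 0) (max p.2 0)) := by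
  apply measurable_of_tendsto_metrizable
    (f := fun (n : ℕ) (p : ℝ × ℝ) =>
      G ((⌈(max p.1 0) * ((n:ℝ)+1)⌉₊ : ℝ)/((n:ℝ)+1)) (max p.2 0))
  · intro n
    have m1 : Measurable fun q : ℝ × ℕ => G ((q.2:ℝ)/((n:ℝ)+1)) (max q.1 0) := by
      apply measurable_from_prod_countable_left
      intro k
      have hcont : Continuous fun x : ℝ => G ((k:ℝ)/((n:ℝ)+1)) (max x 0) := by
        rw [continuous_iff_continuousAt]
        intro x
        have hks : (0:ℝ) ≤ (k:ℝ)/((n:ℝ)+1) := by positivity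
        have hmm : ContinuousAt (fun x : ℝ => max x 0) x :=
          (continuous_id.max continuous_const).continuousAt
        have := ContinuousAt.comp (g := fun z => G ((k:ℝ)/((n:ℝ)+1)) z)
          (f := fun x : ℝ => max x 0) (x := x)
          (hc₂ _ (max x 0) hks (le_max_right _ _)) hmm
        exact this
      exact hcont.measurable
    exact m1.comp (measurable_snd.prodMk
      (Nat.measurable_ceil.comp ((measurable_fst.max measurable_const).mul_const _)))
  · rw [tendsto_pi_nhds]
    intro p
    set σ := max p.1 0 with hσdef
    have hσ : 0 ≤ σ := le_max_right _ _
    have hub : ∀ n : ℕ, (⌈σ * ((n:ℝ)+1)⌉₊ : ℝ)/((n:ℝ)+1) ≤ σ + 1/((n:ℝ)+1) := by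
      intro n
      have hn1 : (0:ℝ) < (n:ℝ)+1 := by positivity
      rw [div_le_iff₀ hn1]
      have h1 : (⌈σ * ((n:ℝ)+1)⌉₊ : ℝ) < σ * ((n:ℝ)+1) + 1 :=
        Nat.ceil_lt_add_one (by positivity)
      have h2 : (σ + 1/((n:ℝ)+1)) * ((n:ℝ)+1) = σ*((n:ℝ)+1) + 1 := by field_simp
      linarith
    have hlb : ∀ n : ℕ, σ ≤ (⌈σ * ((n:ℝ)+1)⌉₊ : ℝ)/((n:ℝ)+1) := by
      intro n
      have hn1 : (0:ℝ) < (n:ℝ)+1 := by positivity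
      rw [le_div_iff₀ hn1]
      exact Nat.le_ceil _
    have hts : Tendsto (fun n : ℕ => (⌈σ * ((n:ℝ)+1)⌉₊ : ℝ)/((n:ℝ)+1)) atTop (𝓝 σ) := by
      apply tendsto_of_tendsto_of_tendsto_of_le_of_le tendsto_const_nhds ?_ hlb hub
      simpa using (tendsto_const_nhds : Tendsto (fun _ : ℕ => σ) atTop (𝓝 σ)).add tendsto_one_div_add_atTop_nhds_zero_nat
    exact (hc₁ σ (max p.2 0) hσ (le_max_right _ _)).tendsto.comp hts

lemma measurable_G1m {G G₁ : ℝ → ℝ → ℝ}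
    (hGm : Measurable (fun p : ℝ × ℝ => G (max p.1 0) (max p.2 0)))
    (hd₁ : ∀ s t : ℝ, 0 ≤ s → 0 ≤ t → HasDerivAt (fun z => G z t) (G₁ s t) s) :
    Measurable (fun p : ℝ × ℝ => if 0 ≤ p.1 then G₁ p.1 (max p.2 0) else 0) := by
  set Gm : ℝ × ℝ → ℝ := fun p => G (max p.1 0) (max p.2 0) with hGmdef
  apply measurable_of_tendsto_metrizable
    (f := fun (n : ℕ) (p : ℝ × ℝ) => ((n:ℝ)+1) * (Gm (p.1 + 1/((n:ℝ)+1), p.2) - Gm p))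
  · intro n
    exact ((hGm.comp ((measurable_fst.add_const _).prodMk measurable_snd)).sub hGm).const_mul _
  · rw [tendsto_pi_nhds]
    intro p
    by_cases hp : 0 ≤ p.1
    · simp only [hp, if_true]
      have hd := hd₁ p.1 (max p.2 0) hp (le_max_right _ _)
      rw [hasDerivAt_iff_tendsto_slope] at hd
      have hseq : Tendsto (fun n : ℕ => p.1 + 1/((n:ℝ)+1)) atTop (𝓝[≠] p.1) := by
        apply tendsto_nhdsWithin_of_tendsto_nhds_of_eventually_within
        · simpa using (tendsto_const_nhds : Tendsto (fun _ : ℕ => p.1) atTop (𝓝 p.1)).add tendsto_one_div_add_atTop_nhds_zero_nat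
        · filter_upwards with n
          simp only [mem_compl_iff, mem_singleton_iff]
          have h1 : (0:ℝ) < 1/((n:ℝ)+1) := by positivity
          intro hcc
          have : (1:ℝ)/((n:ℝ)+1) = 0 := by linarith [hcc]
          linarith
      refine Tendsto.congr ?_ (hd.comp hseq)
      intro n
      have h1 : (0:ℝ) < 1/((n:ℝ)+1) := by positivity
      have hmax1 : max (p.1 + 1/((n:ℝ)+1)) 0 = p.1 + 1/((n:ℝ)+1) := max_eq_left (by linarith)
      have hmax2 : max p.1 0 = p.1 := max_eq_left hp
      simp only [Function.comp_apply, hGmdef, hmax1, hmax2]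
      rw [slope_def_field, show (p.1 + 1/((n:ℝ)+1)) - p.1 = 1/((n:ℝ)+1) by ring, div_eq_mul_inv, one_div, inv_inv]
      ring
    · simp only [hp, if_false]
      have hneg : p.1 < 0 := lt_of_not_ge hp
      obtain ⟨N, hN⟩ := exists_nat_one_div_lt (show (0:ℝ) < -p.1 by linarith)
      refine Tendsto.congr' ?_ tendsto_const_nhds
      rw [EventuallyEq, eventually_atTop]
      refine ⟨N, fun n hn => ?_⟩
      have hcast : (N:ℝ) ≤ (n:ℝ) := Nat.cast_le.2 hn
      have h1 : 1/((n:ℝ)+1) ≤ 1/((N:ℝ)+1) :=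
        one_div_le_one_div_of_le (by positivity) (by linarith)
      have h2 : p.1 + 1/((n:ℝ)+1) < 0 := by linarith
      have hm1 : max (p.1 + 1/((n:ℝ)+1)) 0 = 0 := max_eq_right h2.le
      have hm2 : max p.1 0 = 0 := max_eq_right hneg.le
      simp only [hGmdef, hm1, hm2, sub_self, mul_zero]

end RearrangementAux
theorem rearrangement_increases_G_integral (N : ℕ) (hN : 1 ≤ N)
    (u₁ u₂ u₁s u₂s : EuclideanSpace ℝ (Fin N) → ℝ)
    (hu₁m : Measurable u₁) (hu₂m : Measurable u₂)
    (hu₁sm : Measurable u₁s) (hu₂sm : Measurable u₂s)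
    (hu₁ : ∀ x, 0 ≤ u₁ x) (hu₂ : ∀ x, 0 ≤ u₂ x)
    (hu₁s : ∀ x, 0 ≤ u₁s x) (hu₂s : ∀ x, 0 ≤ u₂s x)
    (hvan₁ : ∀ t : ℝ, 0 < t → volume {x | t < u₁ x} < ⊤)
    (hvan₂ : ∀ t : ℝ, 0 < t → volume {x | t < u₂ x} < ⊤)
    (heq₁ : ∀ t : ℝ, 0 < t → volume {x | t < u₁s x} = volume {x | t < u₁ x})
    (heq₂ : ∀ t : ℝ, 0 < t → volume {x | t < u₂s x} = volume {x | t < u₂ x})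
    (hball₁ : ∀ t : ℝ, 0 < t →
      ∃ r : ℝ, {x | t < u₁s x} = Metric.ball (0 : EuclideanSpace ℝ (Fin N)) r)
    (hball₂ : ∀ t : ℝ, 0 < t →
      ∃ r : ℝ, {x | t < u₂s x} = Metric.ball (0 : EuclideanSpace ℝ (Fin N)) r)
    (G G₁ G₂ : ℝ → ℝ → ℝ)
    (hG0 : G 0 0 = 0)
    (hd₁ : ∀ s t : ℝ, 0 ≤ s → 0 ≤ t → HasDerivAt (fun z => G z t) (G₁ s t) s)
    (hd₂ : ∀ s t : ℝ, 0 ≤ s → 0 ≤ t → HasDerivAt (fun z => G s z) (G₂ s t) t)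
    (hG₁nonneg : ∀ s t : ℝ, 0 ≤ s → 0 ≤ t → 0 ≤ G₁ s t)
    (hG₂nonneg : ∀ s t : ℝ, 0 ≤ s → 0 ≤ t → 0 ≤ G₂ s t)
    (hG₁mono : ∀ s t t' : ℝ, 0 ≤ s → 0 ≤ t → t ≤ t' → G₁ s t ≤ G₁ s t')
    (hG₂mono : ∀ s s' t : ℝ, 0 ≤ s → s ≤ s' → 0 ≤ t → G₂ s t ≤ G₂ s' t)
    (hint : Integrable (fun x => G (u₁ x) (u₂ x)))
    (hints : Integrable (fun x => G (u₁s x) (u₂s x))) :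
    (∫ x, G (u₁ x) (u₂ x)) ≤ ∫ x, G (u₁s x) (u₂s x) := by
  classical
  have hc₁ : ∀ s t : ℝ, 0 ≤ s → 0 ≤ t → ContinuousAt (fun z => G z t) s :=
    fun s t hs ht => (hd₁ s t hs ht).continuousAt
  have hc₂ : ∀ s t : ℝ, 0 ≤ s → 0 ≤ t → ContinuousAt (fun z => G s z) t :=
    fun s t hs ht => (hd₂ s t hs ht).continuousAt
  have hGm := RearrangementAux.measurable_Gm hc₁ hc₂
  have hG1m := RearrangementAux.measurable_G1m hGm hd₁
  set G1m : ℝ × ℝ → ℝ := fun p => if 0 ≤ p.1 then G₁ p.1 (max p.2 0) else 0 with hG1mdef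
  -- monotonicity facts
  have hmonoGen : ∀ t : ℝ, 0 ≤ t → MonotoneOn (fun z => G z t - G z 0) (Set.Ici (0:ℝ)) := by
    intro t ht
    apply monotoneOn_of_deriv_nonneg (convex_Ici 0)
    · intro z hz
      exact (((hd₁ z t hz ht).sub (hd₁ z 0 hz le_rfl)).continuousAt).continuousWithinAt
    · intro z hz
      rw [interior_Ici] at hz
      exact ((hd₁ z t hz.le ht).sub
        (hd₁ z 0 hz.le le_rfl)).differentiableAt.differentiableWithinAt
    · intro z hz
      rw [interior_Ici] at hz
      rw [HasDerivAt.deriv (f := fun z => G z t - G z 0) ((hd₁ z t hz.le ht).sub (hd₁ z 0 hz.le le_rfl))]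
      exact sub_nonneg.2 (hG₁mono z 0 t hz.le le_rfl ht)
  have hmonof : MonotoneOn (fun z => G z 0) (Set.Ici (0:ℝ)) := by
    apply monotoneOn_of_deriv_nonneg (convex_Ici 0)
    · intro z hz; exact (hd₁ z 0 hz le_rfl).continuousAt.continuousWithinAt
    · intro z hz; rw [interior_Ici] at hz
      exact (hd₁ z 0 hz.le le_rfl).differentiableAt.differentiableWithinAt
    · intro z hz; rw [interior_Ici] at hz
      rw [(hd₁ z 0 hz.le le_rfl).deriv]
      exact hG₁nonneg z 0 hz.le le_rfl
  have hmonoh : MonotoneOn (fun z => G 0 z) (Set.Ici (0:ℝ)) := by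
    apply monotoneOn_of_deriv_nonneg (convex_Ici 0)
    · intro z hz; exact (hd₂ 0 z le_rfl hz).continuousAt.continuousWithinAt
    · intro z hz; rw [interior_Ici] at hz
      exact (hd₂ 0 z le_rfl hz.le).differentiableAt.differentiableWithinAt
    · intro z hz; rw [interior_Ici] at hz
      rw [(hd₂ 0 z le_rfl hz.le).deriv]
      exact hG₂nonneg 0 z le_rfl hz.le
  have hf0 : ∀ s : ℝ, 0 ≤ s → 0 ≤ G s 0 := by
    intro s hs
    have h := hmonof (Set.mem_Ici.2 le_rfl) (Set.mem_Ici.2 hs) hs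
    simp only at h
    linarith [hG0]
  have hh0 : ∀ t : ℝ, 0 ≤ t → 0 ≤ G 0 t := by
    intro t ht
    have h := hmonoh (Set.mem_Ici.2 le_rfl) (Set.mem_Ici.2 ht) ht
    simp only at h
    linarith [hG0]
  have hR0 : ∀ s t : ℝ, 0 ≤ s → 0 ≤ t → 0 ≤ G s t - G s 0 - G 0 t + G 0 0 := by
    intro s t hs ht
    have h := hmonoGen t ht (Set.mem_Ici.2 le_rfl) (Set.mem_Ici.2 hs) hs
    simp only at h
    linarith
  have hGnn : ∀ s t : ℝ, 0 ≤ s → 0 ≤ t → 0 ≤ G s t := by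
    intro s t hs ht
    have h1 := hR0 s t hs ht
    have h2 := hf0 s hs
    have h3 := hh0 t ht
    linarith
  -- FTC in lintegral form
  have hFTC : ∀ s t : ℝ, 0 ≤ s → 0 ≤ t →
      (∫⁻ σ in Set.Ioi (0:ℝ), (Set.Iio s).indicator
          (fun σ => ENNReal.ofReal (G1m (σ, t) - G1m (σ, 0))) σ)
        = ENNReal.ofReal (G s t - G s 0 - G 0 t + G 0 0) := by
    intro s t hs ht
    have hder : ∀ z ∈ Set.uIcc (0:ℝ) s,
        HasDerivAt (fun z => G z t - G z 0) (G₁ z t - G₁ z 0) z := by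
      intro z hz
      rw [Set.uIcc_of_le hs] at hz
      exact (hd₁ z t hz.1 ht).sub (hd₁ z 0 hz.1 le_rfl)
    have hderIoo : ∀ z ∈ Set.Ioo (min (0:ℝ) s) (max 0 s),
        HasDerivAt (fun z => G z t - G z 0) (G₁ z t - G₁ z 0) z := by
      intro z hz
      rw [min_eq_left hs, max_eq_right hs] at hz
      exact (hd₁ z t hz.1.le ht).sub (hd₁ z 0 hz.1.le le_rfl)
    have hnn : ∀ z ∈ Set.Ioo (min (0:ℝ) s) (max 0 s), 0 ≤ G₁ z t - G₁ z 0 := by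
      intro z hz
      rw [min_eq_left hs, max_eq_right hs] at hz
      exact sub_nonneg.2 (hG₁mono z 0 t hz.1.le le_rfl ht)
    have hcont : ContinuousOn (fun z => G z t - G z 0) (Set.uIcc (0:ℝ) s) :=
      fun z hz => (hder z hz).continuousAt.continuousWithinAt
    have hii : IntervalIntegrable (fun σ => G₁ σ t - G₁ σ 0) volume 0 s :=
      intervalIntegral.intervalIntegrable_deriv_of_nonneg hcont hderIoo hnn
    have hftc := intervalIntegral.integral_eq_sub_of_hasDerivAt hder hii
    rw [intervalIntegral.integral_of_le hs] at hftc
    have hio : IntegrableOn (fun σ => G₁ σ t - G₁ σ 0) (Set.Ioc 0 s) volume :=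
      (intervalIntegrable_iff_integrableOn_Ioc_of_le hs).1 hii
    have hae : 0 ≤ᵐ[volume.restrict (Set.Ioc (0:ℝ) s)] fun σ => G₁ σ t - G₁ σ 0 := by
      filter_upwards [ae_restrict_mem measurableSet_Ioc] with σ hσ
      exact sub_nonneg.2 (hG₁mono σ 0 t hσ.1.le le_rfl ht)
    have h5 := ofReal_integral_eq_lintegral_ofReal hio hae
    rw [lintegral_indicator measurableSet_Iio, Measure.restrict_restrict measurableSet_Iio]
    have hset : Set.Iio s ∩ Set.Ioi (0:ℝ) = Set.Ioo 0 s := by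
      ext z
      simp only [Set.mem_inter_iff, Set.mem_Iio, Set.mem_Ioi, Set.mem_Ioo]
      tauto
    rw [hset]
    have h6 : (∫⁻ σ in Set.Ioo (0:ℝ) s, ENNReal.ofReal (G1m (σ, t) - G1m (σ, 0)))
        = ∫⁻ σ in Set.Ioo (0:ℝ) s, ENNReal.ofReal (G₁ σ t - G₁ σ 0) := by
      apply setLIntegral_congr_fun measurableSet_Ioo
      intro σ hσ
      have h01 : (0:ℝ) ≤ σ := hσ.1.le
      simp only [hG1mdef, h01, if_true, max_eq_left ht, max_self]
    rw [h6, setLIntegral_congr (MeasureTheory.Ioo_ae_eq_Ioc (a := (0:ℝ)) (b := s)), ← h5, hftc]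
    congr 1
    ring
  -- single-variable rearrangement identity
  have hsingle : ∀ (v vs : EuclideanSpace ℝ (Fin N) → ℝ), Measurable v → Measurable vs →
      (∀ x, 0 ≤ v x) → (∀ x, 0 ≤ vs x) →
      (∀ t : ℝ, 0 < t → volume {x | t < v x} < ⊤) →
      (∀ t : ℝ, 0 < t → volume {x | t < vs x} = volume {x | t < v x}) →
      ∀ φ : ℝ → ℝ, Monotone φ → φ 0 = 0 →
      (∫⁻ x, ENNReal.ofReal (φ (vs x))) = ∫⁻ x, ENNReal.ofReal (φ (v x)) := by
    intro v vs hv hvs hv0 hvs0 hvan heq φ hφ hφ0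
    have hφnn : ∀ r : ℝ, 0 ≤ r → 0 ≤ φ r := fun r hr => hφ0 ▸ hφ hr
    rw [lintegral_eq_lintegral_meas_lt volume (ae_of_all _ fun x => hφnn _ (hvs0 x))
        ((hφ.measurable.comp hvs).aemeasurable),
      lintegral_eq_lintegral_meas_lt volume (ae_of_all _ fun x => hφnn _ (hv0 x))
        ((hφ.measurable.comp hv).aemeasurable)]
    apply setLIntegral_congr_fun measurableSet_Ioi
    intro τ hτ
    dsimp only
    have hτ' : φ 0 < τ := by rw [hφ0]; exact hτ
    rcases RearrangementAux.monotone_level hφ hτ' with hV | ⟨c, hc, hV⟩ | ⟨c, hc, hV⟩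
    · have hVe : ∀ r : ℝ, ¬ τ < φ r := by
        intro r hr
        rw [Set.eq_empty_iff_forall_notMem] at hV
        exact hV r hr
      have h1 : ∀ w : EuclideanSpace ℝ (Fin N) → ℝ,
          {x | τ < φ (w x)} = (∅ : Set (EuclideanSpace ℝ (Fin N))) :=
        fun w => Set.eq_empty_iff_forall_notMem.2 fun x hx => hVe _ hx
      rw [h1 v, h1 vs]
    · have h1 : ∀ w : EuclideanSpace ℝ (Fin N) → ℝ,
          {x | τ < φ (w x)} = {x | c < w x} := by
        intro w
        ext x
        have hmem : τ < φ (w x) ↔ (w x) ∈ {r | τ < φ r} := Iff.rfl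
        simp only [Set.mem_setOf_eq, hmem, hV, Set.mem_Ioi]
      rw [h1 v, h1 vs]
      exact RearrangementAux.meas_gt_eq hv0 hvs0 heq hc
    · have h1 : ∀ w : EuclideanSpace ℝ (Fin N) → ℝ,
          {x | τ < φ (w x)} = {x | c ≤ w x} := by
        intro w
        ext x
        have hmem : τ < φ (w x) ↔ (w x) ∈ {r | τ < φ r} := Iff.rfl
        simp only [Set.mem_setOf_eq, hmem, hV, Set.mem_Ici]
      rw [h1 v, h1 vs]
      exact RearrangementAux.meas_ge_eq hv hvs hvan heq hc
  -- per-σ layer-cake computation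
  have hlayer : ∀ (v w : EuclideanSpace ℝ (Fin N) → ℝ), Measurable v → Measurable w →
      ∀ σ : ℝ, 0 < σ →
      (∫⁻ x, ({p : EuclideanSpace ℝ (Fin N) × ℝ | p.2 < v p.1}).indicator
          (fun p => ENNReal.ofReal (G1m (p.2, w p.1) - G1m (p.2, 0))) (x, σ))
        = ∫⁻ τ in Set.Ioi (0:ℝ),
            volume ({x | τ < G₁ σ (max (w x) 0) - G₁ σ 0} ∩ {x | σ < v x}) := by
    intro v w hv hw σ hσ
    have hA : MeasurableSet {x | σ < v x} := measurableSet_lt measurable_const hv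
    have hφmono : Monotone (fun r : ℝ => G₁ σ (max r 0) - G₁ σ 0) := by
      intro a b hab
      simp only
      have := hG₁mono σ (max a 0) (max b 0) hσ.le (le_max_right _ _) (max_le_max hab le_rfl)
      linarith
    have hstep1 : (∫⁻ x, ({p : EuclideanSpace ℝ (Fin N) × ℝ | p.2 < v p.1}).indicator
        (fun p => ENNReal.ofReal (G1m (p.2, w p.1) - G1m (p.2, 0))) (x, σ))
        = ∫⁻ x, ({x | σ < v x}).indicator
            (fun x => ENNReal.ofReal (G₁ σ (max (w x) 0) - G₁ σ 0)) x := by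
      apply lintegral_congr
      intro x
      simp only [Set.indicator_apply, Set.mem_setOf_eq, hG1mdef, hσ.le, if_true, max_self]
    rw [hstep1, lintegral_indicator hA]
    have hmeas : AEMeasurable (fun x => G₁ σ (max (w x) 0) - G₁ σ 0)
        (volume.restrict {x | σ < v x}) :=
      (hφmono.measurable.comp hw).aemeasurable
    rw [lintegral_eq_lintegral_meas_lt _
      (ae_of_all _ fun x => sub_nonneg.2
        (hG₁mono σ 0 (max (w x) 0) hσ.le le_rfl (le_max_right _ _))) hmeas]
    apply setLIntegral_congr_fun measurableSet_Ioi
    intro τ hτ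
    exact Measure.restrict_apply
      (measurableSet_lt measurable_const (hφmono.measurable.comp hw))
  -- pointwise comparison of the layers
  have hcomp : ∀ σ : ℝ, 0 < σ → ∀ τ : ℝ, 0 < τ →
      volume ({x | τ < G₁ σ (max (u₂ x) 0) - G₁ σ 0} ∩ {x | σ < u₁ x})
        ≤ volume ({x | τ < G₁ σ (max (u₂s x) 0) - G₁ σ 0} ∩ {x | σ < u₁s x}) := by
    intro σ hσ τ hτ
    have hφmono : Monotone (fun r : ℝ => G₁ σ (max r 0) - G₁ σ 0) := by
      intro a b hab
      simp only
      have := hG₁mono σ (max a 0) (max b 0) hσ.le (le_max_right _ _) (max_le_max hab le_rfl)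
      linarith
    have hφ0 : (fun r : ℝ => G₁ σ (max r 0) - G₁ σ 0) 0 < τ := by
      simp only [max_self, sub_self]
      exact hτ
    obtain ⟨r, hr⟩ := hball₁ σ hσ
    have hAA : volume {x | σ < u₁s x} = volume {x | σ < u₁ x} := heq₁ σ hσ
    have hrad : ∀ x y : EuclideanSpace ℝ (Fin N), ‖y‖ < ‖x‖ → u₂s x ≤ u₂s y :=
      fun x y h => RearrangementAux.radial_mono hu₂s hball₂ h
    rcases RearrangementAux.monotone_level hφmono hφ0 with hV | ⟨c, hc, hV⟩ | ⟨c, hc, hV⟩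
    · have h1 : {x | τ < G₁ σ (max (u₂ x) 0) - G₁ σ 0}
          = (∅ : Set (EuclideanSpace ℝ (Fin N))) := by
        rw [Set.eq_empty_iff_forall_notMem] at hV ⊢
        exact fun x hx => hV (u₂ x) hx
      rw [h1]
      simp
    · have h1 : ∀ w : EuclideanSpace ℝ (Fin N) → ℝ,
          {x | τ < G₁ σ (max (w x) 0) - G₁ σ 0} = {x | c < w x} := by
        intro w
        ext x
        have hmem : τ < G₁ σ (max (w x) 0) - G₁ σ 0
            ↔ (w x) ∈ {t : ℝ | τ < G₁ σ (max t 0) - G₁ σ 0} := Iff.rfl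
        simp only [Set.mem_setOf_eq, hmem, hV, Set.mem_Ioi]
      rw [h1 u₂, h1 u₂s]
      apply RearrangementAux.meas_inter_le
        (RearrangementAux.meas_gt_eq hu₂ hu₂s heq₂ hc) hAA
      exact (RearrangementAux.ball_subset_or hr
        (fun x hx y hy => lt_of_lt_of_le hx (hrad x y hy))).symm
    · have h1 : ∀ w : EuclideanSpace ℝ (Fin N) → ℝ,
          {x | τ < G₁ σ (max (w x) 0) - G₁ σ 0} = {x | c ≤ w x} := by
        intro w
        ext x
        have hmem : τ < G₁ σ (max (w x) 0) - G₁ σ 0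
            ↔ (w x) ∈ {t : ℝ | τ < G₁ σ (max t 0) - G₁ σ 0} := Iff.rfl
        simp only [Set.mem_setOf_eq, hmem, hV, Set.mem_Ici]
      rw [h1 u₂, h1 u₂s]
      apply RearrangementAux.meas_inter_le
        (RearrangementAux.meas_ge_eq hu₂m hu₂sm hvan₂ heq₂ hc) hAA
      exact (RearrangementAux.ball_subset_or hr
        (fun x hx y hy => le_trans hx (hrad x y hy))).symm
  -- Tonelli swap
  have hswap : ∀ (v w : EuclideanSpace ℝ (Fin N) → ℝ), Measurable v → Measurable w →
      (∀ x, 0 ≤ v x) → (∀ x, 0 ≤ w x) →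
      (∫⁻ x, ENNReal.ofReal (G (v x) (w x) - G (v x) 0 - G 0 (w x) + G 0 0))
        = ∫⁻ σ in Set.Ioi (0:ℝ),
            ∫⁻ x, ({p : EuclideanSpace ℝ (Fin N) × ℝ | p.2 < v p.1}).indicator
              (fun p => ENNReal.ofReal (G1m (p.2, w p.1) - G1m (p.2, 0))) (x, σ) := by
    intro v w hv hw hv0 hw0
    have h1 : ∀ x, ENNReal.ofReal (G (v x) (w x) - G (v x) 0 - G 0 (w x) + G 0 0)
        = ∫⁻ σ in Set.Ioi (0:ℝ), (Set.Iio (v x)).indicator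
            (fun σ => ENNReal.ofReal (G1m (σ, w x) - G1m (σ, 0))) σ :=
      fun x => (hFTC (v x) (w x) (hv0 x) (hw0 x)).symm
    rw [lintegral_congr h1]
    have h2 : ∀ x, (∫⁻ σ in Set.Ioi (0:ℝ), (Set.Iio (v x)).indicator
          (fun σ => ENNReal.ofReal (G1m (σ, w x) - G1m (σ, 0))) σ)
        = ∫⁻ σ in Set.Ioi (0:ℝ),
            ({p : EuclideanSpace ℝ (Fin N) × ℝ | p.2 < v p.1}).indicator
              (fun p => ENNReal.ofReal (G1m (p.2, w p.1) - G1m (p.2, 0))) (x, σ) := by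
      intro x
      apply lintegral_congr
      intro σ
      simp only [Set.indicator_apply, Set.mem_Iio, Set.mem_setOf_eq]
    rw [lintegral_congr h2]
    have hT : MeasurableSet {p : EuclideanSpace ℝ (Fin N) × ℝ | p.2 < v p.1} :=
      measurableSet_lt measurable_snd (hv.comp measurable_fst)
    have hF : Measurable (fun p : EuclideanSpace ℝ (Fin N) × ℝ =>
        ENNReal.ofReal (G1m (p.2, w p.1) - G1m (p.2, 0))) :=
      ((hG1m.comp (measurable_snd.prodMk (hw.comp measurable_fst))).sub
        (hG1m.comp (measurable_snd.prodMk measurable_const))).ennreal_ofReal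
    exact lintegral_lintegral_swap ((hF.indicator hT).aemeasurable)
  -- the R-part inequality
  have hRpart : (∫⁻ x, ENNReal.ofReal (G (u₁ x) (u₂ x) - G (u₁ x) 0 - G 0 (u₂ x) + G 0 0))
      ≤ ∫⁻ x, ENNReal.ofReal (G (u₁s x) (u₂s x) - G (u₁s x) 0 - G 0 (u₂s x) + G 0 0) := by
    rw [hswap u₁ u₂ hu₁m hu₂m hu₁ hu₂, hswap u₁s u₂s hu₁sm hu₂sm hu₁s hu₂s]
    refine lintegral_mono_ae ?_
    filter_upwards [ae_restrict_mem measurableSet_Ioi] with σ hσ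
    rw [hlayer u₁ u₂ hu₁m hu₂m σ hσ, hlayer u₁s u₂s hu₁sm hu₂sm σ hσ]
    refine lintegral_mono_ae ?_
    filter_upwards [ae_restrict_mem measurableSet_Ioi] with τ hτ
    exact hcomp σ hσ τ hτ
  -- single-variable parts
  set φf : ℝ → ℝ := fun z => G (max z 0) 0 with hφfdef
  set φh : ℝ → ℝ := fun z => G 0 (max z 0) with hφhdef
  have hφfmono : Monotone φf := fun a b hab =>
    hmonof (Set.mem_Ici.2 (le_max_right a 0)) (Set.mem_Ici.2 (le_max_right b 0))
      (max_le_max hab le_rfl)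
  have hφhmono : Monotone φh := fun a b hab =>
    hmonoh (Set.mem_Ici.2 (le_max_right a 0)) (Set.mem_Ici.2 (le_max_right b 0))
      (max_le_max hab le_rfl)
  have hφf0 : φf 0 = 0 := by simp only [hφfdef, max_self]; exact hG0
  have hφh0 : φh 0 = 0 := by simp only [hφhdef, max_self]; exact hG0
  have hfeq : (∫⁻ x, ENNReal.ofReal (φf (u₁s x))) = ∫⁻ x, ENNReal.ofReal (φf (u₁ x)) :=
    hsingle u₁ u₁s hu₁m hu₁sm hu₁ hu₁s hvan₁ heq₁ φf hφfmono hφf0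
  have hheq : (∫⁻ x, ENNReal.ofReal (φh (u₂s x))) = ∫⁻ x, ENNReal.ofReal (φh (u₂ x)) :=
    hsingle u₂ u₂s hu₂m hu₂sm hu₂ hu₂s hvan₂ heq₂ φh hφhmono hφh0
  -- assembly
  have hsplit : ∀ (v w : EuclideanSpace ℝ (Fin N) → ℝ),
      (∀ x, 0 ≤ v x) → (∀ x, 0 ≤ w x) → ∀ x,
      ENNReal.ofReal (G (v x) (w x))
        = ENNReal.ofReal (G (v x) (w x) - G (v x) 0 - G 0 (w x) + G 0 0)
          + (ENNReal.ofReal (φf (v x)) + ENNReal.ofReal (φh (w x))) := by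
    intro v w hv0 hw0 x
    have h1 : φf (v x) = G (v x) 0 := by
      simp only [hφfdef, max_eq_left (hv0 x)]
    have h2 : φh (w x) = G 0 (w x) := by
      simp only [hφhdef, max_eq_left (hw0 x)]
    rw [h1, h2, ← ENNReal.ofReal_add (hf0 _ (hv0 x)) (hh0 _ (hw0 x)),
      ← ENNReal.ofReal_add (hR0 _ _ (hv0 x) (hw0 x))
        (add_nonneg (hf0 _ (hv0 x)) (hh0 _ (hw0 x)))]
    congr 1
    rw [hG0]
    ring
  have hfp : Measurable fun x => ENNReal.ofReal (φf (u₁ x)) :=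
    (hφfmono.measurable.comp hu₁m).ennreal_ofReal
  have hhp : Measurable fun x => ENNReal.ofReal (φh (u₂ x)) :=
    (hφhmono.measurable.comp hu₂m).ennreal_ofReal
  have hfps : Measurable fun x => ENNReal.ofReal (φf (u₁s x)) :=
    (hφfmono.measurable.comp hu₁sm).ennreal_ofReal
  have hhps : Measurable fun x => ENNReal.ofReal (φh (u₂s x)) :=
    (hφhmono.measurable.comp hu₂sm).ennreal_ofReal
  have hkey : (∫⁻ x, ENNReal.ofReal (G (u₁ x) (u₂ x)))
      ≤ ∫⁻ x, ENNReal.ofReal (G (u₁s x) (u₂s x)) := by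
    rw [lintegral_congr (hsplit u₁ u₂ hu₁ hu₂), lintegral_congr (hsplit u₁s u₂s hu₁s hu₂s),
      lintegral_add_right _ (g := fun x => ENNReal.ofReal (φf (u₁ x)) + ENNReal.ofReal (φh (u₂ x))) (hfp.add hhp), lintegral_add_right _ (g := fun x => ENNReal.ofReal (φf (u₁s x)) + ENNReal.ofReal (φh (u₂s x))) (hfps.add hhps),
      lintegral_add_right _ hhp, lintegral_add_right _ hhps]
    exact add_le_add hRpart (le_of_eq (by rw [hfeq, hheq]))
  have h1 := ofReal_integral_eq_lintegral_ofReal hint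
    (ae_of_all _ fun x => hGnn _ _ (hu₁ x) (hu₂ x))
  have h2 := ofReal_integral_eq_lintegral_ofReal hints
    (ae_of_all _ fun x => hGnn _ _ (hu₁s x) (hu₂s x))
  have h3 : ENNReal.ofReal (∫ x, G (u₁ x) (u₂ x))
      ≤ ENNReal.ofReal (∫ x, G (u₁s x) (u₂s x)) := by
    rw [h1, h2]
    exact hkey
  exact (ENNReal.ofReal_le_ofReal_iff
    (integral_nonneg fun x => hGnn _ _ (hu₁s x) (hu₂s x))).1 h3
end
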